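/- In the A_d* lattice scaled by β > 0, any two lattice points whose Voronoi cells (scaled permutahedra) do not intersect have Voronoi cells at Euclidean distance at least β·√2/(d+1). -/

import Mathlib

/-- The standard generators `g_t` of the `A_d^*` lattice in the sum-zero
hyperplane of `ℝ^(d+1)`: `g_t = (1/(d+1))·(t,…,t, t−(d+1),…,t−(d+1))` with
`d+1−t` coordinates equal to `t` and `t` coordinates equal to `t−(d+1)`. -/
noncomputable def AstarGen (d t : ℕ) : EuclideanSpace ℝ (Fin (d + 1)) :=
  WithLp.toLp 2 fun i => if (i : ℕ) + t < d + 1 then (t : ℝ) / ((d : ℝ) + 1)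
           else ((t : ℝ) - ((d : ℝ) + 1)) / ((d : ℝ) + 1)

/-- The `A_d^*` lattice scaled by `β`: all `β`-scaled integer linear combinations
of the generators `g_1, …, g_d`. -/
noncomputable def AstarLattice (d : ℕ) (β : ℝ) : Set (EuclideanSpace ℝ (Fin (d + 1))) :=
  {x | ∃ m : ℕ → ℤ, x = β • ∑ t ∈ Finset.Icc 1 d, m t • AstarGen d t}

/-- The Voronoi cell of a lattice point `ℓ` (a scaled permutahedron): the points
at least as close to `ℓ` as to any other lattice point. -/
noncomputable def voronoiCell (d : ℕ) (β : ℝ) (ℓ : EuclideanSpace ℝ (Fin (d + 1))) :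
    Set (EuclideanSpace ℝ (Fin (d + 1))) :=
  {x | ∀ ℓ' ∈ AstarLattice d β, dist x ℓ ≤ dist x ℓ'}

open Finset

lemma gen_apply (d t : ℕ) (i : Fin (d+1)) :
    AstarGen d t i = (t : ℝ)/((d:ℝ)+1) - (if (i:ℕ) + t < d + 1 then (0:ℝ) else 1) := by
  unfold AstarGen
  simp only [WithLp.ofLp_toLp]
  have hne : ((d:ℝ)+1) ≠ 0 := by positivity
  split_ifs with h
  · ring
  · field_simp

lemma count_lemma (d t : ℕ) (ht : t ≤ d + 1) :
    (∑ i : Fin (d+1), (if (i:ℕ) + t < d + 1 then (0:ℤ) else 1)) = t := by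
  rw [Fin.sum_univ_eq_sum_range (fun i => if i + t < d + 1 then (0:ℤ) else 1) (d+1)]
  rw [range_eq_Ico, ← Finset.sum_Ico_consecutive (fun i => if i + t < d + 1 then (0:ℤ) else 1)
    (Nat.zero_le (d+1-t)) (Nat.sub_le (d+1) t)]
  have h1 : ∑ i ∈ Ico 0 (d+1-t), (if i + t < d + 1 then (0:ℤ) else 1) = 0 := by
    apply Finset.sum_eq_zero
    intro i hi
    simp only [mem_Ico] at hi
    rw [if_pos (by omega)]
  have h2 : ∑ i ∈ Ico (d+1-t) (d+1), (if i + t < d + 1 then (0:ℤ) else 1) = t := by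
    have : ∀ i ∈ Ico (d+1-t) (d+1), (if i + t < d + 1 then (0:ℤ) else 1) = 1 := by
      intro i hi
      simp only [mem_Ico] at hi
      rw [if_neg (by omega)]
    rw [Finset.sum_congr rfl this, Finset.sum_const, Nat.card_Ico]
    simp
    omega
  rw [h1, h2, zero_add]

lemma lattice_coords {d : ℕ} {β : ℝ} {ℓ : EuclideanSpace ℝ (Fin (d+1))}
    (h : ℓ ∈ AstarLattice d β) :
    ∃ (T : ℤ) (n : Fin (d+1) → ℤ), (∑ i, n i) = T ∧
      ∀ i, ℓ i = β * ((T:ℝ)/((d:ℝ)+1) - (n i : ℝ)) := by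
  obtain ⟨m, hm⟩ := h
  refine ⟨∑ t ∈ Icc 1 d, m t * t, fun i => ∑ t ∈ Icc 1 d, m t * (if (i:ℕ)+t < d+1 then 0 else 1),
    ?_, ?_⟩
  · rw [Finset.sum_comm]
    apply Finset.sum_congr rfl
    intro t ht
    rw [← Finset.mul_sum, count_lemma d t (by simp at ht; omega)]
  · intro i
    have hsum : (∑ t ∈ Icc 1 d, m t • AstarGen d t) i
        = ∑ t ∈ Icc 1 d, (m t : ℝ) * AstarGen d t i := by
      rw [WithLp.ofLp_sum, Finset.sum_apply i _ _]
      exact Finset.sum_congr rfl (fun t _ => by simp)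
    have hℓi : ℓ i = β * ∑ t ∈ Icc 1 d, (m t : ℝ) * AstarGen d t i := by
      rw [hm, ← hsum]
      simp
    rw [hℓi]
    congr 1
    rw [Finset.sum_congr rfl (fun t (_ : t ∈ Icc 1 d) => by rw [gen_apply])]
    have expand : ∀ t ∈ Icc 1 d, (m t : ℝ) * ((t:ℝ)/((d:ℝ)+1) - (if (i:ℕ)+t<d+1 then (0:ℝ) else 1))
        = (m t : ℝ) * (t:ℝ)/((d:ℝ)+1) - (m t:ℝ) * (if (i:ℕ)+t<d+1 then (0:ℝ) else 1) := by
      intro t _; ring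
    rw [Finset.sum_congr rfl expand, Finset.sum_sub_distrib, ← Finset.sum_div]
    congr 1
    · push_cast; rfl
    · push_cast
      apply Finset.sum_congr rfl
      intro t _
      split_ifs <;> simp

noncomputable def Pvec (d : ℕ) (i : Fin (d+1)) : EuclideanSpace ℝ (Fin (d+1)) :=
  WithLp.toLp 2 fun j => (if j = i then 1 else 0) - 1/((d:ℝ)+1)

lemma Pmem (d : ℕ) (i : Fin (d+1)) :
    ∃ m : ℕ → ℤ, Pvec d i = ∑ t ∈ Finset.Icc 1 d, m t • AstarGen d t := by
  refine ⟨fun s => (if s = d - (i:ℕ) then 1 else 0) - (if s = d + 1 - (i:ℕ) then 1 else 0), ?_⟩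
  ext j
  rw [WithLp.ofLp_sum, Finset.sum_apply j _ _]
  have hterm : ∀ t ∈ Finset.Icc 1 d,
      (((if t = d - (i:ℕ) then (1:ℤ) else 0) - (if t = d + 1 - (i:ℕ) then 1 else 0)) • AstarGen d t) j
      = (if t = d - (i:ℕ) then AstarGen d t j else 0) - (if t = d + 1 - (i:ℕ) then AstarGen d t j else 0) := by
    intro t _
    have h0 : (((if t = d - (i:ℕ) then (1:ℤ) else 0) - (if t = d + 1 - (i:ℕ) then 1 else 0)) • AstarGen d t) j
      = (((if t = d - (i:ℕ) then (1:ℤ) else 0) - (if t = d + 1 - (i:ℕ) then 1 else 0)) : ℤ) * AstarGen d t j := by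
      simp
    rw [h0]
    push_cast
    split_ifs <;> ring
  rw [Finset.sum_congr rfl hterm, Finset.sum_sub_distrib, Finset.sum_ite_eq', Finset.sum_ite_eq']
  have hile : (i:ℕ) ≤ d := i.is_le
  have hjle : (j:ℕ) ≤ d := j.is_le
  rcases Nat.eq_zero_or_pos d with rfl | hd
  · have hji : j = i := Fin.ext (by omega)
    simp [Pvec, hji]
  have hA : (((d - (i:ℕ) : ℕ)):ℝ) = (d:ℝ) - (i:ℝ) := by
    rw [Nat.cast_sub hile]
  have hB : (((d + 1 - (i:ℕ) : ℕ)):ℝ) = (d:ℝ) + 1 - (i:ℝ) := by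
    rw [Nat.cast_sub (by omega)]
    push_cast; ring
  have hne : ((d:ℝ)+1) ≠ 0 := by positivity
  rw [gen_apply, gen_apply, hA, hB]
  have e1 : ((j:ℕ) + (d - (i:ℕ)) < d+1) ↔ (j:ℕ) ≤ (i:ℕ) := by omega
  have e2 : ((j:ℕ) + (d+1 - (i:ℕ)) < d+1) ↔ (j:ℕ) < (i:ℕ) := by omega
  have e3 : ((d - (i:ℕ)) ∈ Finset.Icc 1 d) ↔ (i:ℕ) < d := by
    simp only [Finset.mem_Icc]; omega
  have e4 : ((d + 1 - (i:ℕ)) ∈ Finset.Icc 1 d) ↔ 1 ≤ (i:ℕ) := by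
    simp only [Finset.mem_Icc]; omega
  simp only [e1, e2, e3, e4, Pvec, WithLp.ofLp_toLp, Fin.ext_iff]
  split_ifs <;>
    first
    | (exfalso; omega)
    | omega
    | (field_simp; (try ring); done)
    | ((have h' : ((i:ℕ):ℝ) = (d:ℝ) := by exact_mod_cast (show ((i:ℕ):ℤ) = (d:ℤ) by omega));
       rw [h']; (try field_simp); (try ring); done)
    | ((have h' : ((i:ℕ):ℝ) = 0 := by exact_mod_cast (show ((i:ℕ):ℤ) = 0 by omega));
       rw [h']; (try field_simp); (try ring); done)

lemma Pmem_neg (d : ℕ) (i : Fin (d+1)) :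
    ∃ m : ℕ → ℤ, (-(Pvec d i) : EuclideanSpace ℝ (Fin (d+1)))
      = ∑ t ∈ Finset.Icc 1 d, m t • AstarGen d t := by
  obtain ⟨m, hm⟩ := Pmem d i
  refine ⟨fun t => -(m t), ?_⟩
  rw [hm, ← Finset.sum_neg_distrib]
  exact Finset.sum_congr rfl (fun t _ => (neg_zsmul _ _).symm)

lemma mem_add {d : ℕ} {β : ℝ} {ℓ v : EuclideanSpace ℝ (Fin (d+1))}
    (hℓ : ℓ ∈ AstarLattice d β)
    (hv : ∃ m : ℕ → ℤ, v = ∑ t ∈ Finset.Icc 1 d, m t • AstarGen d t) :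
    ℓ + β • v ∈ AstarLattice d β := by
  obtain ⟨m, hm⟩ := hℓ
  obtain ⟨m', hm'⟩ := hv
  refine ⟨fun t => m t + m' t, ?_⟩
  rw [hm, hm', ← smul_add, ← Finset.sum_add_distrib]
  congr 1
  exact Finset.sum_congr rfl (fun t _ => by rw [add_zsmul])

lemma mem_voronoi_iff {d : ℕ} {β : ℝ} {ℓ x : EuclideanSpace ℝ (Fin (d+1))} :
    x ∈ voronoiCell d β ℓ ↔
      ∀ ℓ' ∈ AstarLattice d β, ∑ i, (x i - ℓ i)^2 ≤ ∑ i, (x i - ℓ' i)^2 := by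
  have hdist : ∀ (a b : EuclideanSpace ℝ (Fin (d+1))),
      dist a b = Real.sqrt (∑ i, (a i - b i)^2) := by
    intro a b
    rw [EuclideanSpace.dist_eq]
    congr 1
    exact Finset.sum_congr rfl (fun i _ => by rw [Real.dist_eq, sq_abs])
  constructor
  · intro h ℓ' hℓ'
    have := h ℓ' hℓ'
    rw [hdist, hdist] at this
    have h2 : (0:ℝ) ≤ ∑ i, (x i - ℓ' i)^2 := by positivity
    exact (Real.sqrt_le_sqrt_iff h2).mp this
  · intro h ℓ' hℓ'
    rw [hdist, hdist]
    exact Real.sqrt_le_sqrt (h ℓ' hℓ')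

lemma halfspace {d : ℕ} {β : ℝ} {ℓ x v : EuclideanSpace ℝ (Fin (d+1))}
    (hx : x ∈ voronoiCell d β ℓ) (hℓ : ℓ ∈ AstarLattice d β)
    (hv : ∃ m : ℕ → ℤ, v = ∑ t ∈ Finset.Icc 1 d, m t • AstarGen d t) :
    2*β*(∑ k, (x k - ℓ k) * v k) ≤ β^2 * ∑ k, (v k)^2 := by
  have hmem := mem_add hℓ hv
  have h := (mem_voronoi_iff.mp hx) _ hmem
  have hexp : ∀ k, (x k - (ℓ + β • v) k)^2
      = (x k - ℓ k)^2 - 2*β*((x k - ℓ k) * v k) + β^2 * (v k)^2 := by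
    intro k
    have : (ℓ + β • v) k = ℓ k + β * v k := by simp
    rw [this]; ring
  rw [Finset.sum_congr rfl (fun k _ => hexp k)] at h
  rw [Finset.sum_add_distrib, Finset.sum_sub_distrib, ← Finset.mul_sum, ← Finset.mul_sum] at h
  linarith

lemma Pvec_sq_sum (d : ℕ) (i : Fin (d+1)) :
    ∑ k, (Pvec d i k)^2 = (d:ℝ)/((d:ℝ)+1) := by
  have hne : ((d:ℝ)+1) ≠ 0 := by positivity
  have hterm : ∀ k : Fin (d+1), (Pvec d i k)^2
      = (if k = i then (1 - 2/((d:ℝ)+1)) else 0) + 1/((d:ℝ)+1)^2 := by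
    intro k
    unfold Pvec
    simp only [WithLp.ofLp_toLp]
    split_ifs <;> field_simp <;> ring
  rw [Finset.sum_congr rfl (fun k _ => hterm k), Finset.sum_add_distrib,
    Finset.sum_ite_eq', Finset.sum_const, if_pos (Finset.mem_univ i),
    Finset.card_univ, Fintype.card_fin]
  rw [nsmul_eq_mul]
  push_cast
  field_simp
  ring

lemma Pvec_dot (d : ℕ) (i : Fin (d+1)) (z : Fin (d+1) → ℝ) :
    ∑ k, z k * Pvec d i k = z i - (∑ k, z k)/((d:ℝ)+1) := by
  have hterm : ∀ k : Fin (d+1), z k * Pvec d i k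
      = (if k = i then z k else 0) - z k/((d:ℝ)+1) := by
    intro k
    unfold Pvec
    simp only [WithLp.ofLp_toLp]
    split_ifs <;> ring
  rw [Finset.sum_congr rfl (fun k _ => hterm k), Finset.sum_sub_distrib,
    Finset.sum_ite_eq', if_pos (Finset.mem_univ i), ← Finset.sum_div]

lemma coord_bound {d : ℕ} {β : ℝ} (hβ : 0 < β) {ℓ x : EuclideanSpace ℝ (Fin (d+1))}
    (hx : x ∈ voronoiCell d β ℓ) (hℓ : ℓ ∈ AstarLattice d β) (i j : Fin (d+1)) :
    (x i - ℓ i) - (x j - ℓ j) ≤ β * d / ((d:ℝ)+1) := by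
  have hne : ((d:ℝ)+1) ≠ 0 := by positivity
  set z : Fin (d+1) → ℝ := fun k => x k - ℓ k with hz
  have h1 := halfspace hx hℓ ⟨_, (Pmem d i).choose_spec⟩
  have h2 := halfspace hx hℓ ⟨_, (Pmem_neg d j).choose_spec⟩
  rw [Pvec_dot d i z, Pvec_sq_sum d i] at h1
  have hdotneg : ∑ k, z k * (-(Pvec d j) : EuclideanSpace ℝ (Fin (d+1))) k
      = -(z j - (∑ k, z k)/((d:ℝ)+1)) := by
    rw [← Pvec_dot d j z, ← Finset.sum_neg_distrib]
    exact Finset.sum_congr rfl (fun k _ => by simp [Pvec]; ring)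
  have hsqneg : ∑ k, ((-(Pvec d j) : EuclideanSpace ℝ (Fin (d+1))) k)^2
      = (d:ℝ)/((d:ℝ)+1) := by
    rw [← Pvec_sq_sum d j]
    exact Finset.sum_congr rfl (fun k _ => by simp [Pvec]; ring)
  rw [hdotneg, hsqneg] at h2
  have hd : (0:ℝ) ≤ (d:ℝ) := Nat.cast_nonneg d
  have h4 : (2*β) * (z i - z j) ≤ (2*β) * (β*((d:ℝ)/((d:ℝ)+1))) := by linarith
  have h5 := le_of_mul_le_mul_left h4 (by positivity : (0:ℝ) < 2*β)
  have h6 : β * ((d:ℝ)/((d:ℝ)+1)) = β * (d:ℝ) / ((d:ℝ)+1) := by ring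
  show z i - z j ≤ β * (d:ℝ) / ((d:ℝ)+1)
  linarith

lemma int_self_le_sq (a : ℤ) : a ≤ a^2 := by
  rcases le_or_gt a 0 with h | h
  · exact le_trans h (sq_nonneg a)
  · have h1 : 1 ≤ a := h
    nlinarith

lemma diamond {d : ℕ} (s k : Fin (d+1) → ℤ) (hs : ∀ i, s i = 0 ∨ s i = 1)
    (T : ℤ) (hT : ∑ i, k i = T) (hT0 : 0 ≤ T) (hTd : T ≤ (d:ℤ)) :
    ∑ i, ((((∑ j, s j : ℤ)):ℝ)/((d:ℝ)+1) - (s i:ℝ)) * ((T:ℝ)/((d:ℝ)+1) - (k i:ℝ))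
      ≤ ∑ i, ((T:ℝ)/((d:ℝ)+1) - (k i:ℝ))^2 := by
  have hD : (0:ℝ) < (d:ℝ)+1 := by positivity
  have hDne : ((d:ℝ)+1) ≠ 0 := ne_of_gt hD
  set t : ℤ := ∑ j, s j with ht
  set SK : ℝ := ∑ i, (s i : ℝ)*(k i : ℝ) with hSK
  set KK : ℝ := ∑ i, (k i : ℝ)^2 with hKK
  have hcard : (Finset.univ : Finset (Fin (d+1))).card = d+1 := by simp
  have hksum : ∑ i, ((k i:ℝ)) = (T:ℝ) := by
    rw [← hT]; push_cast; rfl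
  have hssum : ∑ i, ((s i:ℝ)) = (t:ℝ) := by
    rw [ht]; push_cast; rfl
  -- integer facts
  have hint1 : (0:ℤ) ≤ ∑ i, (k i^2 - s i * k i) := by
    apply Finset.sum_nonneg
    intro i _
    rcases hs i with h | h
    · rw [h]; simpa using sq_nonneg (k i)
    · rw [h]; simpa using int_self_le_sq (k i)
  have hint2 : T - t ≤ ∑ i, (k i^2 - s i * k i) := by
    rw [← hT, ht, ← Finset.sum_sub_distrib]
    apply Finset.sum_le_sum
    intro i _
    rcases hs i with h | h
    · rw [h]; simpa using int_self_le_sq (k i)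
    · rw [h]; nlinarith [sq_nonneg (k i - 1)]
  have hcastint : ((∑ i, (k i^2 - s i * k i) : ℤ) : ℝ) = KK - SK := by
    push_cast
    rw [Finset.sum_sub_distrib]
  have hA' : (0:ℝ) ≤ KK - SK := by
    rw [← hcastint]; exact_mod_cast hint1
  have hB' : (T:ℝ) - (t:ℝ) ≤ KK - SK := by
    rw [← hcastint]; exact_mod_cast hint2
  -- closed forms
  have R_eq : ∑ i, ((T:ℝ)/((d:ℝ)+1) - (k i:ℝ))^2 = KK - (T:ℝ)^2/((d:ℝ)+1) := by
    have expand : ∀ i : Fin (d+1), ((T:ℝ)/((d:ℝ)+1) - (k i:ℝ))^2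
        = (((T:ℝ)/((d:ℝ)+1))^2 - 2*((T:ℝ)/((d:ℝ)+1))*(k i:ℝ)) + (k i:ℝ)^2 := by
      intro i; ring
    rw [Finset.sum_congr rfl (fun i _ => expand i), Finset.sum_add_distrib,
      Finset.sum_sub_distrib, Finset.sum_const, ← Finset.mul_sum, hksum, hcard,
      nsmul_eq_mul, ← hKK]
    push_cast
    try field_simp
    try ring
  have L_eq : ∑ i, (((t:ℤ):ℝ)/((d:ℝ)+1) - (s i:ℝ)) * ((T:ℝ)/((d:ℝ)+1) - (k i:ℝ))
      = SK - (t:ℝ)*(T:ℝ)/((d:ℝ)+1) := by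
    have expand : ∀ i : Fin (d+1), (((t:ℤ):ℝ)/((d:ℝ)+1) - (s i:ℝ)) * ((T:ℝ)/((d:ℝ)+1) - (k i:ℝ))
        = ((((t:ℝ)/((d:ℝ)+1)) * ((T:ℝ)/((d:ℝ)+1)) - ((t:ℝ)/((d:ℝ)+1))*(k i:ℝ))
          - ((T:ℝ)/((d:ℝ)+1))*(s i:ℝ)) + (s i:ℝ)*(k i:ℝ) := by
      intro i; ring
    rw [Finset.sum_congr rfl (fun i _ => expand i), Finset.sum_add_distrib,
      Finset.sum_sub_distrib, Finset.sum_sub_distrib, Finset.sum_const,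
      ← Finset.mul_sum, ← Finset.mul_sum, hksum, hssum, hcard, nsmul_eq_mul, ← hSK]
    push_cast
    field_simp
    ring
  rw [L_eq, R_eq]
  -- final: SK - t*T/D ≤ KK - T^2/D
  have hTr0 : (0:ℝ) ≤ (T:ℝ) := by exact_mod_cast hT0
  have hTrd : (T:ℝ) ≤ (d:ℝ) := by exact_mod_cast hTd
  have key : (SK - KK) * ((d:ℝ)+1) ≤ (T:ℝ)*((t:ℝ)-(T:ℝ)) := by
    nlinarith [mul_nonneg hTr0 (by linarith : (0:ℝ) ≤ (t:ℝ) - (T:ℝ) - (SK - KK)),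
      mul_nonneg (by linarith : (0:ℝ) ≤ ((d:ℝ)+1) - (T:ℝ)) hA']
  have e1 : SK - (t:ℝ)*(T:ℝ)/((d:ℝ)+1) = (SK*((d:ℝ)+1) - (t:ℝ)*(T:ℝ))/((d:ℝ)+1) := by
    field_simp
  have e2 : KK - (T:ℝ)^2/((d:ℝ)+1) = (KK*((d:ℝ)+1) - (T:ℝ)^2)/((d:ℝ)+1) := by
    field_simp
  rw [e1, e2]
  have key2 : SK*((d:ℝ)+1) - (t:ℝ)*(T:ℝ) ≤ KK*((d:ℝ)+1) - (T:ℝ)^2 := by nlinarith [key]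
  exact div_le_div_of_nonneg_right key2 hD.le

lemma diamond' {d : ℕ} (u W : Fin (d+1) → ℝ) (n w : Fin (d+1) → ℤ) (Tu Tw : ℤ)
    (hn_sum : ∑ i, n i = Tu) (hw_sum : ∑ i, w i = Tw)
    (hu : ∀ i, u i = (Tu:ℝ)/((d:ℝ)+1) - (n i : ℝ))
    (hW : ∀ i, W i = (Tw:ℝ)/((d:ℝ)+1) - (w i : ℝ))
    (hsmall : ∀ i j, n i - n j ≤ 1) :
    ∑ i, u i * W i ≤ ∑ i, (W i)^2 := by
  have hD : (0:ℝ) < (d:ℝ)+1 := by positivity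
  have hDne : ((d:ℝ)+1) ≠ 0 := ne_of_gt hD
  have hDZ : ((d:ℤ)+1) ≠ 0 := by omega
  obtain ⟨i₀, -, hmin⟩ := Finset.exists_min_image Finset.univ n ⟨0, Finset.mem_univ 0⟩
  set A : ℤ := n i₀ with hA
  set s : Fin (d+1) → ℤ := fun i => n i - A with hs_def
  have hs : ∀ i, s i = 0 ∨ s i = 1 := by
    intro i
    have h1 := hmin i (Finset.mem_univ i)
    have h2 := hsmall i i₀
    simp only [hs_def]
    omega
  set q : ℤ := Tw / ((d:ℤ)+1) with hq
  set r : ℤ := Tw % ((d:ℤ)+1) with hr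
  set k : Fin (d+1) → ℤ := fun i => w i - q with hk_def
  have hcard : (Finset.univ : Finset (Fin (d+1))).card = d+1 := by simp
  have hk_sum : ∑ i, k i = r := by
    simp only [hk_def]
    rw [Finset.sum_sub_distrib, hw_sum, Finset.sum_const, hcard, hr, Int.emod_def]
    push_cast
    ring
  have hr0 : 0 ≤ r := Int.emod_nonneg Tw hDZ
  have hrd : r ≤ (d:ℤ) := by
    have := Int.emod_lt_of_pos Tw (show (0:ℤ) < (d:ℤ)+1 by omega)
    omega
  have hs_sum : ∑ i, s i = Tu - ((d:ℤ)+1)*A := by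
    simp only [hs_def]
    rw [Finset.sum_sub_distrib, hn_sum, Finset.sum_const, hcard]
    push_cast
    ring
  have happly := diamond s k hs r hk_sum hr0 hrd
  have hu_eq : ∀ i : Fin (d+1),
      (((∑ j, s j : ℤ)):ℝ)/((d:ℝ)+1) - (s i:ℝ) = u i := by
    intro i
    rw [hs_sum, hu i, hs_def]
    push_cast
    field_simp
    ring
  have hW_eq : ∀ i : Fin (d+1), ((r:ℤ):ℝ)/((d:ℝ)+1) - (k i:ℝ) = W i := by
    intro i
    rw [hW i, hk_def, hr, Int.emod_def]
    push_cast
    field_simp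
    ring
  calc ∑ i, u i * W i
      = ∑ i, ((((∑ j, s j : ℤ)):ℝ)/((d:ℝ)+1) - (s i:ℝ)) * (((r:ℤ):ℝ)/((d:ℝ)+1) - (k i:ℝ)) :=
        Finset.sum_congr rfl (fun i _ => by rw [hu_eq i, hW_eq i])
    _ ≤ ∑ i, (((r:ℤ):ℝ)/((d:ℝ)+1) - (k i:ℝ))^2 := happly
    _ = ∑ i, (W i)^2 := Finset.sum_congr rfl (fun i _ => by rw [hW_eq i])

lemma half_mid {d : ℕ} {β : ℝ} (hβ : 0 < β) {ℓa ℓb : EuclideanSpace ℝ (Fin (d+1))}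
    (ha : ℓa ∈ AstarLattice d β)
    (Ta Tb : ℤ) (na nb : Fin (d+1) → ℤ)
    (hasum : ∑ i, na i = Ta) (hbsum : ∑ i, nb i = Tb)
    (hacoord : ∀ i, ℓa i = β * ((Ta:ℝ)/((d:ℝ)+1) - (na i : ℝ)))
    (hbcoord : ∀ i, ℓb i = β * ((Tb:ℝ)/((d:ℝ)+1) - (nb i : ℝ)))
    (hsmall : ∀ i j, (nb i - na i) - (nb j - na j) ≤ 1) :
    ((WithLp.toLp 2 (fun i => (ℓa i + ℓb i)/2) : EuclideanSpace ℝ (Fin (d+1))) ∈ voronoiCell d β ℓa) := by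
  have hβne : β ≠ 0 := ne_of_gt hβ
  rw [mem_voronoi_iff]
  intro ℓ' hℓ'
  obtain ⟨T₃, k₃, hk₃sum, hk₃⟩ := lattice_coords hℓ'
  set u : Fin (d+1) → ℝ := fun i => (ℓb i - ℓa i)/β with hu_def
  set W : Fin (d+1) → ℝ := fun i => (ℓ' i - ℓa i)/β with hW_def
  have hu : ∀ i, u i = (((Tb - Ta : ℤ)):ℝ)/((d:ℝ)+1) - ((nb i - na i : ℤ) : ℝ) := by
    intro i
    rw [hu_def]
    simp only
    rw [hbcoord i, hacoord i]
    push_cast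
    field_simp
    ring
  have hW : ∀ i, W i = (((T₃ - Ta : ℤ)):ℝ)/((d:ℝ)+1) - ((k₃ i - na i : ℤ) : ℝ) := by
    intro i
    rw [hW_def]
    simp only
    rw [hk₃ i, hacoord i]
    push_cast
    field_simp
    ring
  have hn_sum : ∑ i, (nb i - na i) = Tb - Ta := by
    rw [Finset.sum_sub_distrib, hasum, hbsum]
  have hw_sum : ∑ i, (k₃ i - na i) = T₃ - Ta := by
    rw [Finset.sum_sub_distrib, hasum, hk₃sum]
  have key := diamond' u W (fun i => nb i - na i) (fun i => k₃ i - na i)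
    (Tb - Ta) (T₃ - Ta) hn_sum hw_sum hu hW hsmall
  -- now expand the squared distances
  have hgoal1 : ∀ i : Fin (d+1),
      ((WithLp.toLp 2 (fun i => (ℓa i + ℓb i)/2) : EuclideanSpace ℝ (Fin (d+1))) i - ℓa i)^2
        = (β * u i / 2)^2 := by
    intro i
    have : ((WithLp.toLp 2 (fun i => (ℓa i + ℓb i)/2) : EuclideanSpace ℝ (Fin (d+1))) i) = (ℓa i + ℓb i)/2 := rfl
    rw [this, hu_def]
    simp only
    field_simp
    ring
  have hgoal2 : ∀ i : Fin (d+1),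
      ((WithLp.toLp 2 (fun i => (ℓa i + ℓb i)/2) : EuclideanSpace ℝ (Fin (d+1))) i - ℓ' i)^2
        = (β * u i / 2 - β * W i)^2 := by
    intro i
    have : ((WithLp.toLp 2 (fun i => (ℓa i + ℓb i)/2) : EuclideanSpace ℝ (Fin (d+1))) i) = (ℓa i + ℓb i)/2 := rfl
    rw [this, hu_def, hW_def]
    simp only
    field_simp
    ring
  rw [Finset.sum_congr rfl (fun i _ => hgoal1 i), Finset.sum_congr rfl (fun i _ => hgoal2 i)]
  have expand : ∀ i : Fin (d+1), (β * u i / 2 - β * W i)^2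
      = (β * u i / 2)^2 - β^2 * (u i * W i) + β^2 * (W i)^2 := by
    intro i; ring
  rw [Finset.sum_congr rfl (fun i _ => expand i), Finset.sum_add_distrib,
    Finset.sum_sub_distrib, ← Finset.mul_sum, ← Finset.mul_sum]
  nlinarith [sq_nonneg β, key]

/-- In the `A_d^*` lattice scaled by `β > 0`, any two lattice points whose
Voronoi cells do not intersect have Voronoi cells at Euclidean distance at least
`β·√2/(d+1)`. -/
theorem voronoi_cells_far_apart (d : ℕ) (β : ℝ) (hβ : 0 < β)
    (ℓ₁ ℓ₂ : EuclideanSpace ℝ (Fin (d + 1)))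
    (h₁ : ℓ₁ ∈ AstarLattice d β) (h₂ : ℓ₂ ∈ AstarLattice d β)
    (hdisj : Disjoint (voronoiCell d β ℓ₁) (voronoiCell d β ℓ₂)) :
    ∀ x ∈ voronoiCell d β ℓ₁, ∀ y ∈ voronoiCell d β ℓ₂,
      β * Real.sqrt 2 / ((d : ℝ) + 1) ≤ dist x y := by
  intro x hx y hy
  have hD : (0:ℝ) < (d:ℝ)+1 := by positivity
  obtain ⟨T₁, n₁, hn₁sum, hn₁⟩ := lattice_coords h₁
  obtain ⟨T₂, n₂, hn₂sum, hn₂⟩ := lattice_coords h₂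
  set n : Fin (d+1) → ℤ := fun i => n₂ i - n₁ i with hn_def
  by_cases H : ∃ i j, 2 ≤ n i - n j
  · obtain ⟨i, j, hij⟩ := H
    have hne_ij : i ≠ j := by
      intro h
      rw [h] at hij
      omega
    have hb1 := coord_bound hβ hx h₁ j i
    have hb2 := coord_bound hβ hy h₂ i j
    have hvji : (ℓ₂ j - ℓ₁ j) - (ℓ₂ i - ℓ₁ i) = β * ((n i - n j : ℤ):ℝ) := by
      rw [hn₂ i, hn₂ j, hn₁ i, hn₁ j]
      simp only [hn_def]
      push_cast
      ring
    have hc : (2:ℝ) ≤ ((n i - n j : ℤ):ℝ) := by exact_mod_cast hij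
    have hv2 : 2*β ≤ (ℓ₂ j - ℓ₁ j) - (ℓ₂ i - ℓ₁ i) := by
      rw [hvji]
      nlinarith
    have harr : β*(d:ℝ)/((d:ℝ)+1) * 2 + 2*β/((d:ℝ)+1) = 2*β := by
      field_simp
    have hS : 2*β/((d:ℝ)+1) ≤ (x i - y i) - (x j - y j) := by linarith
    have hdistxy : dist x y = Real.sqrt (∑ k, (x k - y k)^2) := by
      rw [EuclideanSpace.dist_eq]
      congr 1
      exact Finset.sum_congr rfl (fun k _ => by rw [Real.dist_eq, sq_abs])
    rw [hdistxy]
    have hsub : (x i - y i)^2 + (x j - y j)^2 ≤ ∑ k, (x k - y k)^2 := by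
      have h := Finset.sum_le_sum_of_subset_of_nonneg
        (Finset.subset_univ ({i, j} : Finset (Fin (d+1))))
        (fun k _ _ => sq_nonneg (x k - y k))
      rwa [Finset.sum_pair hne_ij] at h
    set c : ℝ := 2*β/((d:ℝ)+1) with hc_def
    have hc0 : (0:ℝ) < c := by rw [hc_def]; positivity
    have habs : c^2 ≤ ((x i - y i) - (x j - y j))^2 := by nlinarith
    have hq : c^2/2 ≤ (x i - y i)^2 + (x j - y j)^2 := by
      nlinarith [sq_nonneg ((x i - y i) + (x j - y j))]
    have hfin : (β * Real.sqrt 2 / ((d:ℝ)+1))^2 ≤ ∑ k, (x k - y k)^2 := by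
      have hsq : (β*Real.sqrt 2/((d:ℝ)+1))^2 = c^2/2 := by
        rw [hc_def, div_pow, div_pow, mul_pow, Real.sq_sqrt (by norm_num : (0:ℝ) ≤ 2)]
        ring
      rw [hsq]
      linarith
    have hnn : (0:ℝ) ≤ β * Real.sqrt 2 / ((d:ℝ)+1) := by positivity
    exact (Real.le_sqrt hnn (by positivity)).mpr hfin
  · exfalso
    push_neg at H
    have hsmall12 : ∀ i j, (n₂ i - n₁ i) - (n₂ j - n₁ j) ≤ 1 := by
      intro i j
      have := H i j
      simp only [hn_def] at this
      omega
    have hsmall21 : ∀ i j, (n₁ i - n₂ i) - (n₁ j - n₂ j) ≤ 1 := by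
      intro i j
      have := H j i
      simp only [hn_def] at this
      omega
    have hp1 := half_mid hβ h₁ T₁ T₂ n₁ n₂ hn₁sum hn₂sum hn₁ hn₂ hsmall12
    have hp2 := half_mid hβ h₂ T₂ T₁ n₂ n₁ hn₂sum hn₁sum hn₂ hn₁ hsmall21
    have hcomm : ((WithLp.toLp 2 (fun i => (ℓ₂ i + ℓ₁ i)/2)) : EuclideanSpace ℝ (Fin (d+1)))
        = ((WithLp.toLp 2 (fun i => (ℓ₁ i + ℓ₂ i)/2)) : EuclideanSpace ℝ (Fin (d+1))) := by
      congr 1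
      funext i
      show (ℓ₂ i + ℓ₁ i)/2 = (ℓ₁ i + ℓ₂ i)/2
      ring
    rw [hcomm] at hp2
    exact Set.disjoint_left.mp hdisj hp1 hp2
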